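/- Let α, β, γ ∈ ℝ satisfy α + β > 0, β > 0 and γ > 0. Then there exists a constant N = N(α, β, γ) > 0 such that for all real numbers a ≥ b > 0, ∫_0^∞ t^{γ/2 − 1} (a + √t)^{−α} (b + √t)^{−(β+γ)} dt ≤ N a^{−α} b^{−β}. -/

import Mathlib

open MeasureTheory

/-- If `x ≤ y ≤ 2x` with `x > 0`, then `y ^ s ≤ 2 ^ |s| * x ^ s`. -/
lemma aux_two_bound {s x y : ℝ} (hx : 0 < x) (h1 : x ≤ y) (h2 : y ≤ 2 * x) :
    y ^ s ≤ 2 ^ |s| * x ^ s := by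
  have h2x : (1 : ℝ) ≤ 2 ^ |s| := Real.one_le_rpow one_le_two (abs_nonneg s)
  rcases le_or_gt 0 s with hs | hs
  · calc y ^ s ≤ (2 * x) ^ s := Real.rpow_le_rpow (by linarith) h2 hs
      _ = 2 ^ s * x ^ s := Real.mul_rpow (by norm_num) hx.le
      _ ≤ 2 ^ |s| * x ^ s := by
          have := Real.rpow_le_rpow_of_exponent_le (x := (2:ℝ)) one_le_two (le_abs_self s)
          have hxs : (0:ℝ) ≤ x ^ s := Real.rpow_nonneg hx.le s
          nlinarith
  · calc y ^ s ≤ x ^ s := Real.rpow_le_rpow_of_nonpos hx h1 hs.le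
      _ ≤ 2 ^ |s| * x ^ s := le_mul_of_one_le_left (Real.rpow_nonneg hx.le s) h2x

/-- Bound a set lintegral of `ofReal f` by a constant multiple of a power integral. -/
lemma aux_key {f : ℝ → ℝ} {S T : Set ℝ} (hT : MeasurableSet T) (hST : S ⊆ T)
    (hT0 : T ⊆ Set.Ioi (0:ℝ)) {C p : ℝ} (hC : 0 ≤ C)
    (hb : ∀ t ∈ S, f t ≤ C * t ^ p)
    (hi : IntegrableOn (fun t => t ^ p) T) :
    ∫⁻ t in S, ENNReal.ofReal (f t) ≤ ENNReal.ofReal (C * ∫ t in T, t ^ p) := by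
  have hmeas : Measurable fun t : ℝ => ENNReal.ofReal (C * t ^ p) := by
    fun_prop
  calc ∫⁻ t in S, ENNReal.ofReal (f t)
      ≤ ∫⁻ t in S, ENNReal.ofReal (C * t ^ p) :=
        setLIntegral_mono hmeas (fun t ht => ENNReal.ofReal_le_ofReal (hb t ht))
    _ ≤ ∫⁻ t in T, ENNReal.ofReal (C * t ^ p) := lintegral_mono_set hST
    _ = ENNReal.ofReal (∫ t in T, C * t ^ p) := by
        rw [← ofReal_integral_eq_lintegral_ofReal (hi.const_mul C)]
        filter_upwards [ae_restrict_mem hT] with t ht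
        exact mul_nonneg hC (Real.rpow_nonneg (le_of_lt (hT0 ht)) p)
    _ = ENNReal.ofReal (C * ∫ t in T, t ^ p) := by rw [MeasureTheory.integral_const_mul]

/-- Let `α + β > 0`, `β > 0`, `γ > 0`. Then there is a constant
`N = N(α, β, γ) > 0` such that for all `a ≥ b > 0`,
`∫_0^∞ t^(γ/2 − 1) (a + √t)^(−α) (b + √t)^(−(β+γ)) dt ≤ N a^(−α) b^(−β)`,
the integral being the Lebesgue integral of the nonnegative integrand over `(0, ∞)`. -/
theorem stmt_0 (α β γ : ℝ) (hαβ : 0 < α + β) (hβ : 0 < β) (hγ : 0 < γ) :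
    ∃ N : ℝ, 0 < N ∧ ∀ a b : ℝ, 0 < b → b ≤ a →
      (∫⁻ t in Set.Ioi (0 : ℝ),
          ENNReal.ofReal
            (t ^ (γ / 2 - 1) * (a + Real.sqrt t) ^ (-α) * (b + Real.sqrt t) ^ (-(β + γ))))
        ≤ ENNReal.ofReal (N * a ^ (-α) * b ^ (-β)) := by
  set C₁ : ℝ := 2 ^ |(-α)| with hC₁def
  set C₂ : ℝ := 2 ^ |(-(β + γ))| with hC₂def
  have hC₁ : 0 < C₁ := Real.rpow_pos_of_pos two_pos _
  have hC₂ : 0 < C₂ := Real.rpow_pos_of_pos two_pos _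
  refine ⟨C₁ * C₂ * (2 / γ + 2 / β + 2 / (α + β)), by positivity, ?_⟩
  intro a b hb hba
  have ha : 0 < a := hb.trans_le hba
  set f : ℝ → ℝ := fun t =>
    t ^ (γ / 2 - 1) * (a + Real.sqrt t) ^ (-α) * (b + Real.sqrt t) ^ (-(β + γ)) with hf
  -- split the domain
  have hb2a2 : b ^ 2 ≤ a ^ 2 := by nlinarith
  have hsplit : Set.Ioi (0:ℝ) = Set.Ioc 0 (b ^ 2) ∪ (Set.Ioc (b ^ 2) (a ^ 2) ∪ Set.Ioi (a ^ 2)) := by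
    rw [Set.Ioc_union_Ioi_eq_Ioi hb2a2, Set.Ioc_union_Ioi_eq_Ioi (by positivity)]
  -- piece 1
  have key1 : ∫⁻ t in Set.Ioc 0 (b ^ 2), ENNReal.ofReal (f t)
      ≤ ENNReal.ofReal ((C₁ * C₂ * (a ^ (-α) * b ^ (-(β + γ)))) *
          ∫ t in Set.Ioc 0 (b ^ 2), t ^ (γ / 2 - 1)) := by
    refine aux_key measurableSet_Ioc (le_refl _) (fun t ht => ht.1) (by positivity) ?_ ?_
    · intro t ht
      obtain ⟨ht0, htb⟩ := ht
      have hst : Real.sqrt t ≤ b := by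
        rw [show (b:ℝ) = Real.sqrt (b ^ 2) by rw [Real.sqrt_sq hb.le]]
        exact Real.sqrt_le_sqrt htb
      have hst0 : 0 ≤ Real.sqrt t := Real.sqrt_nonneg t
      have h1 : (a + Real.sqrt t) ^ (-α) ≤ C₁ * a ^ (-α) :=
        aux_two_bound ha (by linarith) (by linarith)
      have h2 : (b + Real.sqrt t) ^ (-(β + γ)) ≤ C₂ * b ^ (-(β + γ)) :=
        aux_two_bound hb (by linarith) (by linarith)
      have htp : (0:ℝ) ≤ t ^ (γ / 2 - 1) := Real.rpow_nonneg ht0.le _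
      calc f t ≤ t ^ (γ / 2 - 1) * (C₁ * a ^ (-α)) * (C₂ * b ^ (-(β + γ))) := by
            apply mul_le_mul
            · exact mul_le_mul_of_nonneg_left h1 htp
            · exact h2
            · positivity
            · positivity
        _ = C₁ * C₂ * (a ^ (-α) * b ^ (-(β + γ))) * t ^ (γ / 2 - 1) := by ring
    · have := intervalIntegral.intervalIntegrable_rpow' (a := 0) (b := b ^ 2)
        (r := γ / 2 - 1) (by linarith)
      rwa [intervalIntegrable_iff_integrableOn_Ioc_of_le (by positivity)] at this
  have int1 : ∫ t in Set.Ioc 0 (b ^ 2), t ^ (γ / 2 - 1) = 2 / γ * b ^ γ := by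
    rw [← intervalIntegral.integral_of_le (by positivity),
      integral_rpow (Or.inl (by linarith))]
    rw [Real.zero_rpow (by linarith), show γ / 2 - 1 + 1 = γ / 2 by ring]
    have hbg : (b ^ 2 : ℝ) ^ (γ / 2) = b ^ γ := by
      rw [← Real.rpow_natCast b 2, ← Real.rpow_mul hb.le]
      norm_num
      congr 1
      ring
    rw [hbg]
    field_simp
    ring
  -- piece 2
  have key2 : ∫⁻ t in Set.Ioc (b ^ 2) (a ^ 2), ENNReal.ofReal (f t)
      ≤ ENNReal.ofReal ((C₁ * C₂ * a ^ (-α)) * ∫ t in Set.Ioi (b ^ 2), t ^ (-β / 2 - 1)) := by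
    refine aux_key measurableSet_Ioi (fun t ht => ht.1) (fun t ht => lt_trans (by positivity : (0:ℝ) < b ^ 2) ht)
      (by positivity) ?_ (integrableOn_Ioi_rpow_of_lt (by linarith) (by positivity))
    intro t ht
    obtain ⟨htb, hta⟩ := ht
    have ht0 : (0:ℝ) < t := lt_trans (by positivity) htb
    have hbs : b ≤ Real.sqrt t := by
      rw [show (b:ℝ) = Real.sqrt (b ^ 2) by rw [Real.sqrt_sq hb.le]]
      exact Real.sqrt_le_sqrt htb.le
    have hsa : Real.sqrt t ≤ a := by
      rw [show (a:ℝ) = Real.sqrt (a ^ 2) by rw [Real.sqrt_sq ha.le]]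
      exact Real.sqrt_le_sqrt hta
    have hst0 : 0 < Real.sqrt t := Real.sqrt_pos.mpr ht0
    have h1 : (a + Real.sqrt t) ^ (-α) ≤ C₁ * a ^ (-α) :=
      aux_two_bound ha (by linarith) (by linarith)
    have h2 : (b + Real.sqrt t) ^ (-(β + γ)) ≤ C₂ * (Real.sqrt t) ^ (-(β + γ)) :=
      aux_two_bound hst0 (by linarith) (by linarith)
    have hsqrt : (Real.sqrt t) ^ (-(β + γ)) = t ^ (-(β + γ) / 2) := by
      rw [Real.sqrt_eq_rpow, ← Real.rpow_mul ht0.le]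
      congr 1
      ring
    have htp : (0:ℝ) ≤ t ^ (γ / 2 - 1) := Real.rpow_nonneg ht0.le _
    calc f t ≤ t ^ (γ / 2 - 1) * (C₁ * a ^ (-α)) * (C₂ * t ^ (-(β + γ) / 2)) := by
          rw [← hsqrt]
          apply mul_le_mul
          · exact mul_le_mul_of_nonneg_left h1 htp
          · exact h2
          · positivity
          · positivity
      _ = (C₁ * C₂ * a ^ (-α)) * (t ^ (γ / 2 - 1) * t ^ (-(β + γ) / 2)) := by ring
      _ = (C₁ * C₂ * a ^ (-α)) * t ^ (-β / 2 - 1) := by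
          rw [← Real.rpow_add ht0]
          ring_nf
  have int2 : ∫ t in Set.Ioi (b ^ 2), t ^ (-β / 2 - 1) = 2 / β * b ^ (-β) := by
    rw [integral_Ioi_rpow_of_lt (by linarith) (by positivity)]
    rw [show -β / 2 - 1 + 1 = -β / 2 by ring]
    have hbg : (b ^ 2 : ℝ) ^ (-β / 2) = b ^ (-β) := by
      rw [← Real.rpow_natCast b 2, ← Real.rpow_mul hb.le]
      norm_num
      congr 1
      ring
    rw [hbg]
    field_simp
  -- piece 3
  have key3 : ∫⁻ t in Set.Ioi (a ^ 2), ENNReal.ofReal (f t)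
      ≤ ENNReal.ofReal ((C₁ * C₂) * ∫ t in Set.Ioi (a ^ 2), t ^ (-(α + β) / 2 - 1)) := by
    refine aux_key measurableSet_Ioi (le_refl _) (fun t ht => lt_trans (by positivity : (0:ℝ) < a ^ 2) ht)
      (by positivity) ?_ (integrableOn_Ioi_rpow_of_lt (by linarith) (by positivity))
    intro t ht
    have hta : a ^ 2 < t := ht
    have ht0 : (0:ℝ) < t := lt_trans (by positivity) hta
    have has : a ≤ Real.sqrt t := by
      rw [show (a:ℝ) = Real.sqrt (a ^ 2) by rw [Real.sqrt_sq ha.le]]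
      exact Real.sqrt_le_sqrt hta.le
    have hst0 : 0 < Real.sqrt t := Real.sqrt_pos.mpr ht0
    have h1 : (a + Real.sqrt t) ^ (-α) ≤ C₁ * (Real.sqrt t) ^ (-α) :=
      aux_two_bound hst0 (by linarith) (by linarith)
    have h2 : (b + Real.sqrt t) ^ (-(β + γ)) ≤ C₂ * (Real.sqrt t) ^ (-(β + γ)) :=
      aux_two_bound hst0 (by linarith) (by linarith)
    have hsqrt : ∀ s : ℝ, (Real.sqrt t) ^ s = t ^ (s / 2) := by
      intro s
      rw [Real.sqrt_eq_rpow, ← Real.rpow_mul ht0.le]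
      congr 1
      ring
    have htp : (0:ℝ) ≤ t ^ (γ / 2 - 1) := Real.rpow_nonneg ht0.le _
    calc f t ≤ t ^ (γ / 2 - 1) * (C₁ * t ^ (-α / 2)) * (C₂ * t ^ (-(β + γ) / 2)) := by
          rw [← hsqrt, ← hsqrt]
          apply mul_le_mul
          · exact mul_le_mul_of_nonneg_left h1 htp
          · exact h2
          · positivity
          · positivity
      _ = (C₁ * C₂) * (t ^ (γ / 2 - 1) * t ^ (-α / 2) * t ^ (-(β + γ) / 2)) := by ring
      _ = (C₁ * C₂) * t ^ (-(α + β) / 2 - 1) := by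
          rw [← Real.rpow_add ht0, ← Real.rpow_add ht0]
          ring_nf
  have int3 : ∫ t in Set.Ioi (a ^ 2), t ^ (-(α + β) / 2 - 1) = 2 / (α + β) * a ^ (-(α + β)) := by
    rw [integral_Ioi_rpow_of_lt (by linarith) (by positivity)]
    rw [show -(α + β) / 2 - 1 + 1 = -(α + β) / 2 by ring]
    have hag : (a ^ 2 : ℝ) ^ (-(α + β) / 2) = a ^ (-(α + β)) := by
      rw [← Real.rpow_natCast a 2, ← Real.rpow_mul ha.le]
      norm_num
      congr 1
      ring
    rw [hag]
    have h : ∀ x s : ℝ, s ≠ 0 → -x / (-s / 2) = 2 / s * x := by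
      intro x s hs
      field_simp
    exact h _ _ (ne_of_gt hαβ)
  -- combine
  rw [hsplit]
  calc ∫⁻ t in Set.Ioc 0 (b ^ 2) ∪ (Set.Ioc (b ^ 2) (a ^ 2) ∪ Set.Ioi (a ^ 2)),
        ENNReal.ofReal (f t)
      ≤ (∫⁻ t in Set.Ioc 0 (b ^ 2), ENNReal.ofReal (f t)) +
        ((∫⁻ t in Set.Ioc (b ^ 2) (a ^ 2), ENNReal.ofReal (f t)) +
          (∫⁻ t in Set.Ioi (a ^ 2), ENNReal.ofReal (f t))) := by
        refine le_trans (lintegral_union_le _ _ _) ?_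
        exact add_le_add_right (lintegral_union_le _ _ _) _
    _ ≤ ENNReal.ofReal ((C₁ * C₂ * (a ^ (-α) * b ^ (-(β + γ)))) * (2 / γ * b ^ γ)) +
        (ENNReal.ofReal ((C₁ * C₂ * a ^ (-α)) * (2 / β * b ^ (-β))) +
          ENNReal.ofReal ((C₁ * C₂) * (2 / (α + β) * a ^ (-(α + β))))) := by
        rw [← int1, ← int2, ← int3]
        exact add_le_add key1 (add_le_add key2 key3)
    _ ≤ ENNReal.ofReal ((C₁ * C₂ * (a ^ (-α) * b ^ (-(β + γ)))) * (2 / γ * b ^ γ) +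
        ((C₁ * C₂ * a ^ (-α)) * (2 / β * b ^ (-β)) +
          (C₁ * C₂) * (2 / (α + β) * a ^ (-(α + β))))) := by
        rw [ENNReal.ofReal_add (by positivity) (by positivity),
          ENNReal.ofReal_add (by positivity) (by positivity)]
    _ ≤ ENNReal.ofReal (C₁ * C₂ * (2 / γ + 2 / β + 2 / (α + β)) * a ^ (-α) * b ^ (-β)) := by
        apply ENNReal.ofReal_le_ofReal
        have e1 : b ^ (-(β + γ)) * b ^ γ = b ^ (-β) := by
          rw [← Real.rpow_add hb]
          congr 1
          ring
        have e2 : a ^ (-(α + β)) ≤ a ^ (-α) * b ^ (-β) := by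
          rw [show -(α + β) = -α + -β by ring, Real.rpow_add ha]
          have : a ^ (-β) ≤ b ^ (-β) :=
            Real.rpow_le_rpow_of_nonpos hb hba (by linarith)
          exact mul_le_mul_of_nonneg_left this (Real.rpow_nonneg ha.le _)
        have h1 : C₁ * C₂ * (a ^ (-α) * b ^ (-(β + γ))) * (2 / γ * b ^ γ)
            = C₁ * C₂ * (2 / γ * (a ^ (-α) * b ^ (-β))) := by
          rw [← e1]; ring
        have h3 : C₁ * C₂ * (2 / (α + β) * a ^ (-(α + β)))
            ≤ C₁ * C₂ * (2 / (α + β) * (a ^ (-α) * b ^ (-β))) := by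
          apply mul_le_mul_of_nonneg_left _ (by positivity)
          exact mul_le_mul_of_nonneg_left e2 (by positivity)
        calc C₁ * C₂ * (a ^ (-α) * b ^ (-(β + γ))) * (2 / γ * b ^ γ) +
            (C₁ * C₂ * a ^ (-α) * (2 / β * b ^ (-β)) +
              C₁ * C₂ * (2 / (α + β) * a ^ (-(α + β))))
            ≤ C₁ * C₂ * (2 / γ * (a ^ (-α) * b ^ (-β))) +
              (C₁ * C₂ * (2 / β * (a ^ (-α) * b ^ (-β))) +
                C₁ * C₂ * (2 / (α + β) * (a ^ (-α) * b ^ (-β)))) := by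
              rw [h1]
              apply add_le_add_right
              apply add_le_add _ h3
              apply le_of_eq
              ring
          _ = C₁ * C₂ * (2 / γ + 2 / β + 2 / (α + β)) * a ^ (-α) * b ^ (-β) := by ring
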